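/- Let R = F2[x^{±1}, y^{±1}] with involution f ↦ f̄ (x ↦ x^{-1}, y ↦ y^{-1}). There is no f ∈ R satisfying (1 + x^{-1}(1 + y + y^{-1}))·f + (1 + x(1 + y + y^{-1}))·f̄ = y² + y^{-2}. -/

import Mathlib

/-- The Laurent polynomial ring `F₂[x^{±1}, y^{±1}]` in two variables. -/
abbrev R2 : Type := AddMonoidAlgebra (ZMod 2) (Fin 2 → ℤ)

/-- The monomial `x^a y^b`. -/
noncomputable def m2 (a b : ℤ) : R2 := AddMonoidAlgebra.single ![a, b] 1

/-- The involution `f ↦ f̄` given by `x ↦ x⁻¹`, `y ↦ y⁻¹`. -/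
noncomputable def bar2 : R2 ≃ₐ[ZMod 2] R2 :=
  AddMonoidAlgebra.domCongr (ZMod 2) (ZMod 2) (AddEquiv.neg (Fin 2 → ℤ))

namespace Stmt14

/-- The obstruction functional's kernel pattern. -/
def mu (v : Fin 2 → ℤ) : ZMod 2 :=
  if v 0 % 2 = 0 then (if v 1 % 4 = 2 then 1 else 0)
  else (if v 1 % 4 = 0 then 0 else 1)

def mu1 (v : Fin 2 → ℤ) : ZMod 2 :=
  if 0 < v 0 ∨ (v 0 = 0 ∧ 0 < v 1) then mu v else 0

noncomputable def lam (μ : (Fin 2 → ℤ) → ZMod 2) (f : R2) : ZMod 2 :=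
  f.coeff.sum fun v c => μ v * c

lemma lam_single (μ : (Fin 2 → ℤ) → ZMod 2) (v : Fin 2 → ℤ) (c : ZMod 2) :
    lam μ (AddMonoidAlgebra.single v c) = μ v * c :=
  Finsupp.sum_single_index (by simp)

lemma lam_add (μ : (Fin 2 → ℤ) → ZMod 2) (f g : R2) :
    lam μ (f + g) = lam μ f + lam μ g := by
  unfold lam; rw [AddMonoidAlgebra.coeff_add]; exact Finsupp.sum_add_index (by simp) (by intros; ring)

lemma lam_zero (μ : (Fin 2 → ℤ) → ZMod 2) : lam μ 0 = 0 := by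
  unfold lam; rw [AddMonoidAlgebra.coeff_zero]; exact Finsupp.sum_zero_index

lemma mu_neg (v : Fin 2 → ℤ) : mu (-v) = mu v := by
  simp only [mu, Pi.neg_apply]
  split_ifs <;> first | rfl | omega

lemma vadd (a b c d : ℤ) : ![a,b] + ![c,d] = ![a+c, b+d] := by
  funext i; fin_cases i <;> simp

lemma vzero : (0 : Fin 2 → ℤ) = ![0,0] := by funext i; fin_cases i <;> simp

lemma mu_rec (v : Fin 2 → ℤ) :
    mu v + mu (![-1,0] + v) + mu (![-1,1] + v) + mu (![-1,-1] + v) = 0 := by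
  simp only [mu]
  split_ifs <;> simp only [Pi.add_apply, Matrix.cons_val_zero, Matrix.cons_val_one, Matrix.head_cons] at * <;> first | decide | omega

/-- the operator A = 1 + x⁻¹(1+y+y⁻¹), expanded into monomials. -/
lemma A_expand :
    (1 + m2 (-1) 0 * (1 + m2 0 1 + m2 0 (-1)) : R2)
      = AddMonoidAlgebra.single ![0,0] 1 + AddMonoidAlgebra.single ![-1,0] 1
        + AddMonoidAlgebra.single ![-1,1] 1 + AddMonoidAlgebra.single ![-1,-1] 1 := by
  simp only [m2, AddMonoidAlgebra.one_def, mul_add, mul_one,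
    AddMonoidAlgebra.single_mul_single, vadd, vzero]
  norm_num
  abel

end Stmt14

namespace Stmt14

lemma bar2_single (v : Fin 2 → ℤ) (c : ZMod 2) :
    bar2 (AddMonoidAlgebra.single v c) = AddMonoidAlgebra.single (-v) c := by
  simp [bar2]

lemma Abar_expand :
    (1 + m2 1 0 * (1 + m2 0 1 + m2 0 (-1)) : R2)
      = AddMonoidAlgebra.single ![0,0] 1 + AddMonoidAlgebra.single ![1,0] 1
        + AddMonoidAlgebra.single ![1,1] 1 + AddMonoidAlgebra.single ![1,-1] 1 := by
  simp only [m2, AddMonoidAlgebra.one_def, mul_add, mul_one,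
    AddMonoidAlgebra.single_mul_single, vadd, vzero]
  norm_num
  abel

lemma vneg (a b : ℤ) : -![a,b] = ![-a,-b] := by
  funext i; fin_cases i <;> simp

lemma bar2_A :
    bar2 (1 + m2 (-1) 0 * (1 + m2 0 1 + m2 0 (-1)) : R2)
      = (1 + m2 1 0 * (1 + m2 0 1 + m2 0 (-1)) : R2) := by
  rw [A_expand, Abar_expand]
  simp only [map_add, bar2_single, vneg]
  norm_num
  abel

lemma two_nsmul_zero (x : R2) : x + x = 0 := by
  have : (2 : ZMod 2) • x = x + x := two_smul (ZMod 2) x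
  rw [show (2 : ZMod 2) = 0 by decide, zero_smul] at this
  exact this.symm

lemma lam_A_mul (f : R2) :
    lam mu ((1 + m2 (-1) 0 * (1 + m2 0 1 + m2 0 (-1)) : R2) * f) = 0 := by
  induction f using AddMonoidAlgebra.induction with
  | zero => rw [mul_zero, lam_zero]
  | single_add v c f _ _ ih =>
      rw [mul_add, lam_add, ih, add_zero, A_expand]
      rw [add_mul, add_mul, add_mul, AddMonoidAlgebra.single_mul_single,
          AddMonoidAlgebra.single_mul_single, AddMonoidAlgebra.single_mul_single,
          AddMonoidAlgebra.single_mul_single, lam_add, lam_add, lam_add,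
          lam_single, lam_single, lam_single, lam_single]
      have h0 : ![(0:ℤ),0] + v = v := by rw [← vzero, zero_add]
      rw [h0]
      have := mu_rec v
      rw [one_mul, ← add_mul, ← add_mul, ← add_mul, this, zero_mul]

lemma mu_split (v : Fin 2 → ℤ) : mu v = mu1 v + mu1 (-v) := by
  by_cases h : 0 < v 0 ∨ (v 0 = 0 ∧ 0 < v 1)
  · have h' : ¬ (0 < (-v) 0 ∨ ((-v) 0 = 0 ∧ 0 < (-v) 1)) := by
      simp only [Pi.neg_apply]; omega
    rw [mu1, if_pos h, mu1, if_neg h', add_zero]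
  · by_cases h2 : 0 < (-v) 0 ∨ ((-v) 0 = 0 ∧ 0 < (-v) 1)
    · rw [mu1, if_neg h, mu1, if_pos h2, zero_add, mu_neg]
    · simp only [Pi.neg_apply] at h2
      have h0 : v 0 = 0 := by omega
      have h1 : v 1 = 0 := by omega
      rw [mu1, if_neg h, mu1, if_neg (by simp only [Pi.neg_apply]; omega), mu, h0, h1]
      norm_num

lemma lam_split (f : R2) : lam mu f = lam mu1 f + lam mu1 (bar2 f) := by
  induction f using AddMonoidAlgebra.induction with
  | zero => rw [lam_zero, map_zero, lam_zero, add_zero]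
  | single_add v c f _ _ ih =>
      rw [lam_add, ih, map_add, bar2_single, lam_add, lam_add, lam_single,
          lam_single, lam_single, mu_split v, add_mul]
      ring

lemma lam_symm_zero (g : R2) (hg : bar2 g = g) : lam mu g = 0 := by
  rw [lam_split, hg]
  exact CharTwo.add_self_eq_zero _

end Stmt14


open Stmt14

/-- Non-existence of commuting interaction terms for the Fibonacci fractal fermion model:
`(1 + x⁻¹(1 + y + y⁻¹)) f + (1 + x(1 + y + y⁻¹)) f̄ = y² + y⁻²` has no solution. -/
theorem stmt_14 :
    ¬ ∃ f : R2,
      (1 + m2 (-1) 0 * (1 + m2 0 1 + m2 0 (-1))) * f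
        + (1 + m2 1 0 * (1 + m2 0 1 + m2 0 (-1))) * bar2 f
      = m2 0 2 + m2 0 (-2) := by
  rintro ⟨f, hf⟩
  set A : R2 := 1 + m2 (-1) 0 * (1 + m2 0 1 + m2 0 (-1)) with hA
  set Ab : R2 := 1 + m2 1 0 * (1 + m2 0 1 + m2 0 (-1)) with hAb
  -- rearrange the hypothesis
  have h2 : Ab * bar2 f = A * f + (m2 0 2 + m2 0 (-2)) := by
    calc Ab * bar2 f = A * f + A * f + Ab * bar2 f := by
          rw [two_nsmul_zero (A * f), zero_add]
      _ = A * f + (A * f + Ab * bar2 f) := by rw [add_assoc]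
      _ = A * f + (m2 0 2 + m2 0 (-2)) := by rw [hf]
  -- the element g = A f + y² is bar-invariant
  set g : R2 := A * f + m2 0 2 with hg
  have hbar_m2 : bar2 (m2 0 2) = m2 0 (-2) := by
    rw [show m2 0 2 = AddMonoidAlgebra.single ![0,2] 1 from rfl, bar2_single, vneg]
    norm_num [m2]
  have hgsymm : bar2 g = g := by
    calc bar2 g = bar2 A * bar2 f + bar2 (m2 0 2) := by rw [hg, map_add, map_mul]
      _ = Ab * bar2 f + m2 0 (-2) := by rw [hA, hAb, bar2_A, hbar_m2]
      _ = A * f + (m2 0 2 + (m2 0 (-2) + m2 0 (-2))) := by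
          rw [h2]; rw [add_assoc, add_assoc]
      _ = g := by rw [two_nsmul_zero, add_zero, hg]
  -- but the functional gives 1 on g
  have h1 : lam mu g = 1 := by
    rw [hg, lam_add, lam_A_mul, zero_add,
        show m2 0 2 = AddMonoidAlgebra.single ![0,2] 1 from rfl, lam_single]
    norm_num [mu]
  rw [lam_symm_zero g hgsymm] at h1
  exact absurd h1.symm one_ne_zero
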